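/- Let m, n be positive integers. If (m*x - 1)*(n*x - 1) = x + 1 for some positive integer x, then x = (m + n + 1)/(m*n); in particular m*n divides m + n + 1 and m, n ∈ {1, 2, 3}. -/
import Mathlib

lemma aux9 (m n x : ℤ) (hm : 1 ≤ m) (hn : 1 ≤ n) (hx : 1 ≤ x)
    (key : m * n * x = m + n + 1) : m ≤ 3 := by
  by_contra h4
  push_neg at h4
  rcases le_or_gt 2 n with h2 | h2
  · nlinarith [mul_nonneg (sub_nonneg.2 h4.le) (sub_nonneg.2 h2),
      mul_nonneg (mul_pos (lt_of_lt_of_le zero_lt_one hm) (lt_of_lt_of_le zero_lt_one hn)).le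
        (sub_nonneg.2 hx)]
  · have hn1 : n = 1 := le_antisymm (by omega) hn
    subst hn1
    rcases le_or_gt 2 x with h2x | h2x
    · nlinarith [mul_nonneg (sub_nonneg.2 h4.le) (sub_nonneg.2 h2x)]
    · have : x = 1 := le_antisymm (by omega) hx
      subst this
      omega

theorem stmt9 (m n x : ℕ) (hm : 0 < m) (hn : 0 < n) (hx : 0 < x)
    (h : ((m : ℤ) * x - 1) * ((n : ℤ) * x - 1) = (x : ℤ) + 1) :
    m * n * x = m + n + 1 ∧ m * n ∣ m + n + 1 ∧
      m ∈ ({1, 2, 3} : Set ℕ) ∧ n ∈ ({1, 2, 3} : Set ℕ) := by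
  have hxz : (0:ℤ) < (x:ℤ) := by exact_mod_cast hx
  have key : (m:ℤ) * n * x = m + n + 1 := by
    have h2 : ((m:ℤ) * n * x) * x = ((m:ℤ) + n + 1) * x := by ring_nf; nlinarith [h]
    exact mul_right_cancel₀ (ne_of_gt hxz) h2
  have keyN : m * n * x = m + n + 1 := by exact_mod_cast key
  refine ⟨keyN, ⟨x, keyN.symm⟩, ?_, ?_⟩
  · have := aux9 m n x (by exact_mod_cast hm) (by exact_mod_cast hn) (by exact_mod_cast hx) key
    have : m ≤ 3 := by exact_mod_cast this
    simp only [Set.mem_insert_iff, Set.mem_singleton_iff]; omega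
  · have := aux9 n m x (by exact_mod_cast hn) (by exact_mod_cast hm) (by exact_mod_cast hx)
      (by linarith [key, mul_comm (m:ℤ) n] )
    have : n ≤ 3 := by exact_mod_cast this
    simp only [Set.mem_insert_iff, Set.mem_singleton_iff]; omega
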